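/- Term model: for a fuzzy theory Λ on a language L = (Σ, X), define the relation t ~_Λ s iff ⊢_Λ t ≡ s (an equivalence relation), let T_Λ be the quotient of Terms(L) by ~_Λ with membership μ_Λ([t]) = sup{ l ∈ H : ⊢_Λ ∃_l t } and with operations induced syntactically, and let ι_can : X → T_Λ send x to [x]. Then T_Λ is a Σ-fuzzy algebra which is a model of Λ, and for every formula φ the following are equivalent: (a) T_Λ ⊨ φ; (b) T_Λ ⊨_{ι_can} φ; (c) ⊢_Λ φ. -/
import Mathlib


universe u

/-- A signature: operation symbols with positive arities, and constant symbols. -/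
structure Signature : Type (u + 1) where
  Op : Type u
  ar : Op → ℕ+
  Const : Type u

/-- Terms of the language `(S, X)`: inductively built from variables, constants and
operation applications. -/
inductive Term (S : Signature.{u}) (X : Type u) : Type u
  | var : X → Term S X
  | const : S.Const → Term S X
  | op (f : S.Op) : (Fin (S.ar f : ℕ) → Term S X) → Term S X

/-- Formulae: equations `s ≡ t` and membership propositions `∃_l t`. -/
inductive Formula (H : Type u) (S : Signature.{u}) (X : Type u) : Type u
  | eq : Term S X → Term S X → Formula H S X
  | mem : H → Term S X → Formula H S X

/-- A sequent `Γ ⊢ φ`. -/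
abbrev Sequent (H : Type u) (S : Signature.{u}) (X : Type u) : Type u :=
  Set (Formula H S X) × Formula H S X

/-- A fuzzy theory: a set of sequents. -/
abbrev Theory (H : Type u) (S : Signature.{u}) (X : Type u) : Type u :=
  Set (Sequent H S X)

/-- Substitution of terms for variables in a term. -/
def Term.subst {S : Signature.{u}} {X : Type u} (σ : X → Term S X) :
    Term S X → Term S X
  | .var x => σ x
  | .const c => .const c
  | .op f ts => .op f fun i => (ts i).subst σ

/-- Substitution of terms for variables in a formula. -/
def Formula.subst {H : Type u} {S : Signature.{u}} {X : Type u} (σ : X → Term S X) :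
    Formula H S X → Formula H S X
  | .eq s t => .eq (s.subst σ) (t.subst σ)
  | .mem l t => .mem l (t.subst σ)

/-- The fuzzy sequent calculus: `Deriv Λ Γ φ` means that the sequent `Γ ⊢ φ` belongs
to the deductive closure `Λ^⊢` of the theory `Λ`. -/
inductive Deriv {H : Type u} [Order.Frame H] {S : Signature.{u}} {X : Type u}
    (Λ : Theory H S X) : Set (Formula H S X) → Formula H S X → Prop
  | ax {Γ φ} : (Γ, φ) ∈ Λ → Deriv Λ Γ φ
  | assum {Γ φ} : φ ∈ Γ → Deriv Λ Γ φ
  | weak {Γ Δ φ} : Deriv Λ Γ φ → Deriv Λ (Γ ∪ Δ) φ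
  | cut {Γ Φ ψ} : (∀ φ ∈ Φ, Deriv Λ Γ φ) → Deriv Λ Φ ψ → Deriv Λ Γ ψ
  | refl {Γ t} : Deriv Λ Γ (.eq t t)
  | symm {Γ s t} : Deriv Λ Γ (.eq s t) → Deriv Λ Γ (.eq t s)
  | trans {Γ s t u} : Deriv Λ Γ (.eq s t) → Deriv Λ Γ (.eq t u) → Deriv Λ Γ (.eq s u)
  | sub {Γ φ} (σ : X → Term S X) :
      Deriv Λ Γ φ → Deriv Λ (Formula.subst σ '' Γ) (φ.subst σ)
  | cong {Γ} (f : S.Op) (ts ss : Fin (S.ar f : ℕ) → Term S X) :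
      (∀ i, Deriv Λ Γ (.eq (ts i) (ss i))) → Deriv Λ Γ (.eq (.op f ts) (.op f ss))
  | inf {Γ t} : Deriv Λ Γ (.mem ⊥ t)
  | mon {Γ l t} (l' : H) : Deriv Λ Γ (.mem l t) → Deriv Λ Γ (.mem (l ⊓ l') t)
  | exp {Γ} (f : S.Op) (ts : Fin (S.ar f : ℕ) → Term S X) (ls : Fin (S.ar f : ℕ) → H) :
      (∀ i, Deriv Λ Γ (.mem (ls i) (ts i))) →
      Deriv Λ Γ (.mem (⨅ i, ls i) (.op f ts))
  | sup {Γ t} (L : Set H) :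
      (∀ l ∈ L, Deriv Λ Γ (.mem l t)) → Deriv Λ Γ (.mem (sSup L) t)
  | fn {Γ l t s} : Deriv Λ Γ (.eq t s) → Deriv Λ Γ (.mem l t) → Deriv Λ Γ (.mem l s)

/-- The deductive closure `Λ^⊢` of a theory `Λ`. -/
def deductiveClosure {H : Type u} [Order.Frame H] {S : Signature.{u}} {X : Type u}
    (Λ : Theory H S X) : Theory H S X :=
  { p | Deriv Λ p.1 p.2 }
/-- A Σ-fuzzy algebra: a fuzzy set with operations (compatible with membership
degrees) and constants. -/
structure FuzzyAlgebra (H : Type u) [Order.Frame H] (S : Signature.{u}) :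
    Type (u + 1) where
  carrier : Type u
  μ : carrier → H
  ops (f : S.Op) : (Fin (S.ar f : ℕ) → carrier) → carrier
  le_ops : ∀ (f : S.Op) (as : Fin (S.ar f : ℕ) → carrier),
    (⨅ i, μ (as i)) ≤ μ (ops f as)
  consts : S.Const → carrier

/-- Evaluation of a term in a Σ-fuzzy algebra under an assignment of the variables. -/
def FuzzyAlgebra.eval {H : Type u} [Order.Frame H] {S : Signature.{u}} {X : Type u}
    (A : FuzzyAlgebra H S) (ι : X → A.carrier) : Term S X → A.carrier
  | .var x => ι x
  | .const c => A.consts c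
  | .op f ts => A.ops f fun i => A.eval ι (ts i)

/-- Satisfaction of a formula in a Σ-fuzzy algebra under an assignment. -/
def FuzzyAlgebra.Sat {H : Type u} [Order.Frame H] {S : Signature.{u}} {X : Type u}
    (A : FuzzyAlgebra H S) (ι : X → A.carrier) : Formula H S X → Prop
  | .eq s t => A.eval ι s = A.eval ι t
  | .mem l t => l ≤ A.μ (A.eval ι t)

/-- Satisfaction of a sequent `Γ ⊢ φ` (with respect to all assignments). -/
def FuzzyAlgebra.SatSeq {H : Type u} [Order.Frame H] {S : Signature.{u}} {X : Type u}
    (A : FuzzyAlgebra H S) (Γ : Set (Formula H S X)) (φ : Formula H S X) : Prop :=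
  ∀ ι : X → A.carrier, (∀ ψ ∈ Γ, A.Sat ι ψ) → A.Sat ι φ

/-- A model of a fuzzy theory: an algebra satisfying all its sequents. -/
def FuzzyAlgebra.IsModel {H : Type u} [Order.Frame H] {S : Signature.{u}} {X : Type u}
    (A : FuzzyAlgebra H S) (Λ : Theory H S X) : Prop :=
  ∀ p ∈ Λ, A.SatSeq p.1 p.2

/-- A morphism of Σ-fuzzy algebras: a fuzzy-set morphism commuting with all
operations and constants. -/
structure FuzzyAlgHom {H : Type u} [Order.Frame H] {S : Signature.{u}}
    (A B : FuzzyAlgebra H S) : Type u where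
  toFun : A.carrier → B.carrier
  le_mem : ∀ x, A.μ x ≤ B.μ (toFun x)
  map_ops : ∀ (f : S.Op) (as : Fin (S.ar f : ℕ) → A.carrier),
    toFun (A.ops f as) = B.ops f fun i => toFun (as i)
  map_consts : ∀ c, toFun (A.consts c) = B.consts c
namespace TermModelAux

variable {H : Type u} [Order.Frame H] {S : Signature.{u}} {X : Type u}

lemma iInf_sSup_le {n : ℕ} (L : Fin n → Set H) :
    (⨅ i, sSup (L i)) ≤ ⨆ ls : (∀ i, L i), ⨅ i, (ls i : H) := by
  induction n with
  | zero =>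
      haveI : Nonempty (∀ i : Fin 0, L i) := ⟨fun i => i.elim0⟩
      simp
  | succ n ih =>
      have h1 : (⨅ i : Fin (n+1), sSup (L i)) ≤
          sSup (L 0) ⊓ ⨅ i : Fin n, sSup (L i.succ) :=
        le_inf (iInf_le _ 0) (le_iInf fun i => iInf_le _ i.succ)
      refine h1.trans ?_
      refine (inf_le_inf_left _ (ih (fun i => L i.succ))).trans ?_
      rw [sSup_inf_eq]
      refine iSup₂_le fun a ha => ?_
      rw [inf_iSup_eq]
      refine iSup_le fun ls' => ?_
      refine le_trans ?_ (le_iSup _ (Fin.cases (⟨a, ha⟩ : L 0) ls'))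
      refine le_iInf fun i => ?_
      induction i using Fin.cases with
      | zero => simpa using inf_le_left
      | succ j => exact inf_le_right.trans ((iInf_le _ j).trans (le_of_eq (by simp)))

variable (Λ : Theory H S X)

/-- The setoid `t ~_Λ s` iff `⊢_Λ t ≡ s`. -/
def tsetoid : Setoid (Term S X) where
  r t s := Deriv Λ ∅ (.eq t s)
  iseqv := ⟨fun _ => Deriv.refl, fun h => Deriv.symm h, fun h h' => Deriv.trans h h'⟩

/-- Canonical quotient map. -/
def qk (t : Term S X) : Quotient (tsetoid Λ) := Quotient.mk (tsetoid Λ) t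

lemma out_rel (t : Term S X) : Deriv Λ ∅ (.eq (qk Λ t).out t) :=
  Quotient.exact ((qk Λ t).out_eq)

/-- The membership degrees of a term. -/
def memSet (t : Term S X) : Set H := { l : H | Deriv Λ ∅ (.mem l t) }

lemma memSet_congr {t s : Term S X} (h : Deriv Λ ∅ (.eq t s)) :
    memSet Λ t = memSet Λ s :=
  Set.ext fun _ => ⟨fun hl => Deriv.fn h hl, fun hl => Deriv.fn (Deriv.symm h) hl⟩

/-- The term model `T_Λ`. -/
noncomputable def TM : FuzzyAlgebra H S where
  carrier := Quotient (tsetoid Λ)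
  μ a := sSup (memSet Λ a.out)
  ops f as := qk Λ (.op f fun i => (as i).out)
  consts c := qk Λ (.const c)
  le_ops f as := by
    show (⨅ i, sSup (memSet Λ ((as i).out))) ≤
      sSup (memSet Λ (qk Λ (.op f fun i => (as i).out)).out)
    rw [memSet_congr Λ (out_rel Λ (.op f fun i => (as i).out))]
    refine (iInf_sSup_le _).trans (iSup_le fun ls => le_sSup ?_)
    exact Deriv.exp f _ (fun i => (ls i : H)) (fun i => (ls i).2)

lemma mu_qk (t : Term S X) : (TM Λ).μ (qk Λ t) = sSup (memSet Λ t) :=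
  congrArg sSup (memSet_congr Λ (out_rel Λ t))

lemma ops_qk (f : S.Op) (ts : Fin (S.ar f : ℕ) → Term S X) :
    (TM Λ).ops f (fun i => qk Λ (ts i)) = qk Λ (.op f ts) :=
  Quotient.sound (Deriv.cong f _ _ fun i => out_rel Λ (ts i))

lemma eval_subst (σ : X → Term S X) (t : Term S X) :
    (TM Λ).eval (fun x => qk Λ (σ x)) t = qk Λ (t.subst σ) := by
  induction t with
  | var x => rfl
  | const c => rfl
  | op f ts ih =>
      show (TM Λ).ops f (fun i => (TM Λ).eval (fun x => qk Λ (σ x)) (ts i)) = _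
      simp only [ih]
      exact ops_qk Λ f _

lemma sat_subst (σ : X → Term S X) (φ : Formula H S X) :
    (TM Λ).Sat (fun x => qk Λ (σ x)) φ ↔ Deriv Λ ∅ (φ.subst σ) := by
  cases φ with
  | eq s t =>
      show (TM Λ).eval _ s = (TM Λ).eval _ t ↔ _
      rw [eval_subst, eval_subst]
      exact ⟨fun h => Quotient.exact h, fun h => Quotient.sound h⟩
  | mem l t =>
      show l ≤ (TM Λ).μ ((TM Λ).eval _ t) ↔ _
      rw [eval_subst, mu_qk]
      constructor
      · intro h
        have hs : Deriv Λ ∅ (.mem (sSup (memSet Λ (t.subst σ))) (t.subst σ)) :=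
          Deriv.sup _ (fun _ hl => hl)
        have := Deriv.mon l hs
        rwa [inf_eq_right.mpr h] at this
      · exact fun h => le_sSup h

lemma subst_var (t : Term S X) : t.subst .var = t := by
  induction t with
  | var x => rfl
  | const c => rfl
  | op f ts ih => simp [Term.subst, ih]

lemma fsubst_var (φ : Formula H S X) : φ.subst .var = φ := by
  cases φ <;> simp [Formula.subst, subst_var]

lemma sat_can (φ : Formula H S X) :
    (TM Λ).Sat (fun x => qk Λ (.var x)) φ ↔ Deriv Λ ∅ φ := by
  simpa [fsubst_var] using sat_subst Λ .var φ

lemma sat_iff (ι : X → (TM Λ).carrier) (φ : Formula H S X) :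
    (TM Λ).Sat ι φ ↔ Deriv Λ ∅ (φ.subst (fun x => (ι x).out)) := by
  have hι : ι = fun x => qk Λ ((ι x).out) := funext fun x => (Quotient.out_eq _).symm
  conv_lhs => rw [hι]
  exact sat_subst Λ _ φ

end TermModelAux

open TermModelAux in
/-- Term model: the relation `t ~_Λ s` iff `⊢_Λ t ≡ s` is an equivalence relation,
and there is a Σ-fuzzy algebra `T_Λ` whose carrier is the quotient of the terms by
`~_Λ`, with membership `μ_Λ [t] = sup { l : ⊢_Λ ∃_l t }` and syntactic operations
and constants, which is a model of `Λ`; moreover for every formula `φ` the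
conditions `T_Λ ⊨ φ`, `T_Λ ⊨_{ι_can} φ` (where `ι_can x = [x]`) and `⊢_Λ φ` are
all equivalent. -/
theorem term_model {H : Type u} [Order.Frame H] {S : Signature.{u}} {X : Type u}
    (Λ : Theory H S X) :
    Equivalence (fun t s : Term S X => Deriv Λ ∅ (.eq t s)) ∧
    ∃ (T : FuzzyAlgebra H S) (q : Term S X → T.carrier),
      Function.Surjective q ∧
      (∀ t s : Term S X, q t = q s ↔ Deriv Λ ∅ (.eq t s)) ∧
      (∀ t : Term S X, T.μ (q t) = sSup { l : H | Deriv Λ ∅ (.mem l t) }) ∧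
      (∀ c : S.Const, T.consts c = q (.const c)) ∧
      (∀ (f : S.Op) (ts : Fin (S.ar f : ℕ) → Term S X),
          T.ops f (fun i => q (ts i)) = q (.op f ts)) ∧
      T.IsModel Λ ∧
      (∀ φ : Formula H S X,
        ((∀ ι : X → T.carrier, T.Sat ι φ) ↔ T.Sat (fun x => q (.var x)) φ) ∧
        (T.Sat (fun x => q (.var x)) φ ↔ Deriv Λ ∅ φ)) := by
  classical
  refine ⟨⟨fun _ => Deriv.refl, fun h => Deriv.symm h, fun h h' => Deriv.trans h h'⟩,
    TM Λ, qk Λ, fun a => ⟨a.out, Quotient.out_eq a⟩,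
    fun t s => ⟨fun h => Quotient.exact h, fun h => Quotient.sound h⟩,
    fun t => mu_qk Λ t, fun c => rfl, ops_qk Λ, ?_, ?_⟩
  · rintro ⟨Γ, φ⟩ hmem ι hΓ
    have hprem : ∀ ψ' ∈ Formula.subst (fun x => (ι x).out) '' Γ, Deriv Λ ∅ ψ' := by
      rintro _ ⟨ψ, hψ, rfl⟩
      exact (sat_iff Λ ι ψ).mp (hΓ ψ hψ)
    exact (sat_iff Λ ι φ).mpr
      (Deriv.cut hprem (Deriv.sub (fun x => (ι x).out) (Deriv.ax hmem)))
  · intro φ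
    refine ⟨⟨fun h => h _, fun h ι => ?_⟩, sat_can Λ φ⟩
    have hD := (sat_can Λ φ).mp h
    refine (sat_iff Λ ι φ).mpr ?_
    have := Deriv.sub (Λ := Λ) (fun x => (ι x).out) hD
    rwa [Set.image_empty] at this
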